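/- arXiv:1309.4565 — 2 statements merged into one kernel-verified Lean document; each statement's English description precedes it below -/
import Mathlib

section
/- Let V be a symplectic ℚ-vector space with Lagrangian subspace L. For each isotropic complement E of L, let θ_E: V × V → ℚ be defined by θ_E(l₁+e₁, l₂+e₂) = ⟨l₂,e₁⟩ (decomposing along V = L ⊕ E). Then for any two isotropic complements E, F of L, the form θ_E restricted to F × F is symmetric. -/
/-- For a symplectic `ℚ`-vector space with Lagrangian `L` and isotropic
complements `E`, `F` of `L`, the form `θ_E` (defined via `V = L ⊕ E`)
restricted to `F × F` is symmetric. -/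
theorem stmt_7 {V : Type*} [AddCommGroup V] [Module ℚ V] [FiniteDimensional ℚ V]
    (B : V →ₗ[ℚ] V →ₗ[ℚ] ℚ)
    (halt : ∀ x : V, B x x = 0)
    (hnd : ∀ x : V, (∀ y : V, B x y = 0) → x = 0)
    (L E F : Submodule ℚ V) (hE : IsCompl L E) (hF : IsCompl L F)
    (hLiso : ∀ x ∈ L, ∀ y ∈ L, B x y = 0)
    (hLdim : 2 * Module.finrank ℚ L = Module.finrank ℚ V)
    (hEiso : ∀ x ∈ E, ∀ y ∈ E, B x y = 0)
    (hFiso : ∀ x ∈ F, ∀ y ∈ F, B x y = 0)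
    (θE : V →ₗ[ℚ] V →ₗ[ℚ] ℚ)
    (hθE : ∀ (l₁ l₂ : L) (e₁ e₂ : E),
      θE ((l₁ : V) + (e₁ : V)) ((l₂ : V) + (e₂ : V)) = B (l₂ : V) (e₁ : V)) :
    ∀ x ∈ F, ∀ y ∈ F, θE x y = θE y x := by
  have hskew : ∀ a b : V, B a b = - B b a := by
    intro a b
    have h := halt (a + b)
    simp only [map_add, LinearMap.add_apply, halt] at h
    linarith
  intro x hx y hy
  obtain ⟨l₁, e₁, hl₁, he₁, hx'⟩ := Submodule.codisjoint_iff_exists_add_eq.mp hE.codisjoint x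
  obtain ⟨l₂, e₂, hl₂, he₂, hy'⟩ := Submodule.codisjoint_iff_exists_add_eq.mp hE.codisjoint y
  have h1 : θE x y = B l₂ e₁ := by
    rw [← hx', ← hy']; exact hθE ⟨l₁, hl₁⟩ ⟨l₂, hl₂⟩ ⟨e₁, he₁⟩ ⟨e₂, he₂⟩
  have h2 : θE y x = B l₁ e₂ := by
    rw [← hx', ← hy']; exact hθE ⟨l₂, hl₂⟩ ⟨l₁, hl₁⟩ ⟨e₂, he₂⟩ ⟨e₁, he₁⟩
  have hxy : B x y = 0 := hFiso x hx y hy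
  rw [← hx', ← hy'] at hxy
  simp only [map_add, LinearMap.add_apply] at hxy
  rw [hLiso l₁ hl₁ l₂ hl₂, hEiso e₁ he₁ e₂ he₂] at hxy
  have := hskew e₁ l₂
  rw [h1, h2]
  linarith
end

section
/- Let V = L ⊕ E = L ⊕ F = L ⊕ G be a symplectic ℚ-vector space where L is Lagrangian and E, F, G are isotropic complements of L, and let θ_E denote the form θ_E(l₁+e₁, l₂+e₂) = ⟨l₂,e₁⟩ relative to the decomposition V = L ⊕ E. Denote by f: V → L and g: V → L the analogous constructions, and let φ_{GF}: G → F be the isomorphism given by including G into V and projecting to F along L (and similarly φ_{GE}, φ_{FE}). Then for all x, y ∈ G: θ_E(x, y) = θ_F(x, y) + θ_E(φ_{GF}(x), φ_{GF}(y)). -/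
/-- Transitivity relation for the forms `θ_E, θ_F` attached to isotropic
complements `E, F, G` of a Lagrangian `L`: for `x, y ∈ G` with images
`x', y' ∈ F` under the projection along `L`,
`θ_E(x, y) = θ_F(x, y) + θ_E(x', y')`. -/
theorem stmt_8 {V : Type*} [AddCommGroup V] [Module ℚ V] [FiniteDimensional ℚ V]
    (B : V →ₗ[ℚ] V →ₗ[ℚ] ℚ)
    (halt : ∀ x : V, B x x = 0)
    (hnd : ∀ x : V, (∀ y : V, B x y = 0) → x = 0)
    (L E F G : Submodule ℚ V)
    (hE : IsCompl L E) (hF : IsCompl L F) (hG : IsCompl L G)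
    (hLiso : ∀ x ∈ L, ∀ y ∈ L, B x y = 0)
    (hLdim : 2 * Module.finrank ℚ L = Module.finrank ℚ V)
    (hEiso : ∀ x ∈ E, ∀ y ∈ E, B x y = 0)
    (hFiso : ∀ x ∈ F, ∀ y ∈ F, B x y = 0)
    (hGiso : ∀ x ∈ G, ∀ y ∈ G, B x y = 0)
    (θE θF : V →ₗ[ℚ] V →ₗ[ℚ] ℚ)
    (hθE : ∀ (l₁ l₂ : L) (e₁ e₂ : E),
      θE ((l₁ : V) + (e₁ : V)) ((l₂ : V) + (e₂ : V)) = B (l₂ : V) (e₁ : V))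
    (hθF : ∀ (l₁ l₂ : L) (f₁ f₂ : F),
      θF ((l₁ : V) + (f₁ : V)) ((l₂ : V) + (f₂ : V)) = B (l₂ : V) (f₁ : V)) :
    ∀ x ∈ G, ∀ y ∈ G, ∀ x' ∈ F, ∀ y' ∈ F,
      x - x' ∈ L → y - y' ∈ L →
      θE x y = θF x y + θE x' y' := by
  intro x hx y hy x' hx' y' hy' hxl hyl
  obtain ⟨a, e, ha, he, hxe⟩ := Submodule.codisjoint_iff_exists_add_eq.mp hE.codisjoint x
  obtain ⟨b, f, hb, hf, hyf⟩ := Submodule.codisjoint_iff_exists_add_eq.mp hE.codisjoint y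
  have h1 : θE x y = B b e := by
    rw [← hxe, ← hyf]; exact hθE ⟨a, ha⟩ ⟨b, hb⟩ ⟨e, he⟩ ⟨f, hf⟩
  have h2 : θF x y = B (y - y') x' := by
    have := hθF ⟨x - x', hxl⟩ ⟨y - y', hyl⟩ ⟨x', hx'⟩ ⟨y', hy'⟩
    simpa [sub_add_cancel] using this
  have hx'' : (a - (x - x')) + e = x' := by rw [← hxe]; abel
  have hy'' : (b - (y - y')) + f = y' := by rw [← hyf]; abel
  have h3 : θE x' y' = B (b - (y - y')) e := by
    have h := hθE ⟨a - (x - x'), sub_mem ha hxl⟩ ⟨b - (y - y'), sub_mem hb hyl⟩ ⟨e, he⟩ ⟨f, hf⟩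
    rw [show ((⟨a - (x - x'), sub_mem ha hxl⟩ : L) : V) + ((⟨e, he⟩ : E) : V) = x' from hx'',
        show ((⟨b - (y - y'), sub_mem hb hyl⟩ : L) : V) + ((⟨f, hf⟩ : E) : V) = y' from hy''] at h
    exact h
  have h4 : B (y - y') x' = B (y - y') e := by
    rw [← hx'', map_add, hLiso _ hyl _ (sub_mem ha hxl), zero_add]
  rw [h1, h2, h3, h4]
  simp [map_sub]
end
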